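/- For every nonempty multi-index I of length n, the element P^I of B lies in the F_2-linear span of the set of elements P^K, where K ranges over admissible multi-indices of length n with e(K) ≥ e(I). -/

import Mathlib

/-! Statements about the algebra `B` of generalized Steenrod operations at `p = 2`. -/

open scoped BigOperators

/-- The generator `P^s` of the free algebra, for `s : ℤ`. -/
noncomputable def Pfree (s : ℤ) : FreeAlgebra (ZMod 2) ℤ := FreeAlgebra.ι (ZMod 2) s

/-- The mod 2 binomial coefficient `binom (s-i-1) (r-2i)`, which is zero unless
`0 ≤ r - 2i ≤ s - i - 1`. -/
def ademCoef (r s i : ℤ) : ZMod 2 :=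
  if 0 ≤ r - 2*i ∧ r - 2*i ≤ s - i - 1 then ((s - i - 1).toNat.choose (r - 2*i).toNat : ZMod 2)
  else 0

/-- The right hand side `Σ_{i ∈ ℤ} binom(s−i−1, r−2i) P^{r+s−i} P^i` of the Adem relation;
all terms with `i` outside `Finset.Icc (r - s + 1) (r / 2)` have vanishing coefficient. -/
noncomputable def ademRHS (r s : ℤ) : FreeAlgebra (ZMod 2) ℤ :=
  ∑ i ∈ Finset.Icc (r - s + 1) (r / 2), ademCoef r s i • (Pfree (r + s - i) * Pfree i)

/-- The Adem relations: for `r < 2s`, `P^r P^s` is related to its admissible expansion. -/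
inductive AdemRel : FreeAlgebra (ZMod 2) ℤ → FreeAlgebra (ZMod 2) ℤ → Prop
  | rel (r s : ℤ) (h : r < 2*s) : AdemRel (Pfree r * Pfree s) (ademRHS r s)

/-- The algebra `B` of generalized Steenrod operations at the prime 2: the quotient of the
free noncommutative `F₂`-algebra on symbols `P^s`, `s ∈ ℤ`, by the two sided ideal generated
by the Adem relations. -/
noncomputable abbrev B : Type := RingQuot AdemRel

/-- The class of a generator `P^s` in `B`. -/
noncomputable def P (s : ℤ) : B := RingQuot.mkAlgHom (ZMod 2) AdemRel (Pfree s)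

/-- The monomial `P^I = P^{i₁} ⋯ P^{iₙ}` in `B` associated to a multi-index `I`. -/
noncomputable def PI (I : List ℤ) : B := (I.map P).prod

/-- A multi-index `I = (i₁, …, iₙ)` is admissible if `iⱼ ≥ 2 i_{j+1}` for all `j`. -/
def Admissible (I : List ℤ) : Prop := I.Chain' (fun a b => 2*b ≤ a)

/-- The excess `e(I) = i₁ − i₂ − ⋯ − iₙ` of a (nonempty) multi-index. -/
def excess : List ℤ → ℤ
  | [] => 0
  | a :: l => a - l.sum

/-- **Statement 12.** For every nonempty multi-index `I` of length `n`, the element `P^I` of `B`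
lies in the `F₂`-linear span of the elements `P^K`, where `K` ranges over admissible
multi-indices of length `n` with `e(K) ≥ e(I)`. -/
lemma PI_nil : PI [] = 1 := rfl

lemma PI_cons (a : ℤ) (l : List ℤ) : PI (a :: l) = P a * PI l := by
  simp [PI]

lemma excess_cons (a : ℤ) (l : List ℤ) : excess (a :: l) = a - l.sum := rfl

lemma ademCoef_ne_zero {r s i : ℤ} (h : ademCoef r s i ≠ 0) :
    0 ≤ r - 2*i ∧ r - 2*i ≤ s - i - 1 := by
  by_contra hc
  exact h (by rw [ademCoef, if_neg hc])

lemma adem (r s : ℤ) (h : r < 2*s) :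
    P r * P s = ∑ i ∈ Finset.Icc (r - s + 1) (r / 2),
      ademCoef r s i • (P (r + s - i) * P i) := by
  have h1 := RingQuot.mkAlgHom_rel (ZMod 2) (AdemRel.rel r s h)
  simp only [ademRHS, map_mul, map_sum, map_smul] at h1
  simpa only [P] using h1

/-- The set of monomials `P^L` with `L` admissible of length `n`, degree `d`,
excess at least `e`, and head at most `c`. -/
def goodSet (n : ℕ) (d e c : ℤ) : Set B :=
  {x | ∃ L : List ℤ, Admissible L ∧ L.length = n ∧ L.sum = d ∧ e ≤ excess L ∧
    L.headI ≤ c ∧ x = PI L}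

lemma goodSet_mono {n : ℕ} {d d' e e' c c' : ℤ} (hd : d = d') (he : e' ≤ e) (hc : c ≤ c') :
    goodSet n d e c ⊆ goodSet n d' e' c' := by
  rintro x ⟨L, h1, h2, h3, h4, h5, h6⟩
  exact ⟨L, h1, h2, hd ▸ h3, le_trans he h4, le_trans h5 hc, h6⟩

lemma key : ∀ (m μ : ℕ) (a : ℤ) (K : List ℤ), Admissible K → K.length = m →
    (2 * K.headI - a).toNat ≤ μ →
    P a * PI K ∈ Submodule.span (ZMod 2)
      (goodSet (m + 1) (a + K.sum) (a - K.sum) (max a (2 * K.headI - 1))) := by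
  intro m
  induction m using Nat.strong_induction_on with
  | _ m IHm =>
  intro μ
  induction μ using Nat.strong_induction_on with
  | _ μ IHμ =>
  intro a K hK hlen hfuel
  cases K with
  | nil =>
    have hm : m = 0 := by simpa using hlen.symm
    subst hm
    refine Submodule.subset_span ⟨[a], ?_, by simp, by simp, by simp [excess_cons, excess],
      by simp, (by simp [PI_cons, PI_nil])⟩
    exact List.isChain_singleton a
  | cons k1 K' =>
    have hm : m = K'.length + 1 := by simpa using hlen.symm
    subst hm
    by_cases hca : 2*k1 ≤ a
    · refine Submodule.subset_span ⟨a :: k1 :: K', List.isChain_cons_cons.mpr ⟨hca, hK⟩,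
        by simp, by simp, ?_, ?_, (PI_cons _ _).symm⟩
      · simp [excess_cons]
      · simp only [List.headI]; exact le_max_left a (2 * k1 - 1)
    · push_neg at hca
      have hadem := adem a k1 (by linarith)
      have expand : P a * PI (k1 :: K') = ∑ i ∈ Finset.Icc (a - k1 + 1) (a/2),
          ademCoef a k1 i • (P (a+k1-i) * (P i * PI K')) := by
        rw [PI_cons, ← mul_assoc, hadem, Finset.sum_mul]
        simp [smul_mul_assoc, mul_assoc]
      rw [expand]
      refine Submodule.sum_mem _ (fun i hi => ?_)
      by_cases hc0 : ademCoef a k1 i = 0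
      · rw [hc0, zero_smul]; exact Submodule.zero_mem _
      · refine Submodule.smul_mem _ _ ?_
        obtain ⟨hb1, hb2⟩ := ademCoef_ne_zero hc0
        have hia : 2*i ≤ a := by linarith
        have hik : a - k1 + 1 ≤ i := by linarith
        have hik1 : i ≤ k1 - 1 := by omega
        have hK' : Admissible K' := hK.tail
        have h1 := IHm K'.length (by omega) ((2*K'.headI - i).toNat) i K' hK' rfl le_rfl
        refine Submodule.span_induction
          (p := fun x _ => P (a+k1-i) * x ∈ Submodule.span (ZMod 2)
            (goodSet (K'.length + 1 + 1) (a + (k1 :: K').sum) (a - (k1 :: K').sum)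
              (max a (2 * (k1 :: K').headI - 1))))
          ?_ ?_ ?_ ?_ h1
        · rintro x ⟨L', hadm', hlen', hsum', hexc', hhead', rfl⟩
          cases L' with
          | nil => simp at hlen'
          | cons l1 R =>
            simp only [List.sum_cons, List.headI, excess_cons] at hsum' hexc' hhead' ⊢
            have hRlen : R.length = K'.length := by simpa using hlen'
            have hl1i : i ≤ l1 := by linarith
            -- head bound : l1 ≤ k1 - 1
            have hl1k : l1 ≤ k1 - 1 := by
              rcases le_max_iff.mp hhead' with h | h
              · omega
              · cases K' with
                | nil =>
                  have hR : R = [] := List.eq_nil_of_length_eq_zero (by simpa using hlen')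
                  subst hR
                  simp only [List.sum_nil] at hsum'
                  omega
                | cons k2 K'' =>
                  have h2k : 2*k2 ≤ k1 := (List.isChain_cons_cons.mp hK).1
                  simp only [List.headI] at h
                  omega
            by_cases hadm2 : 2*l1 ≤ a + k1 - i
            · refine Submodule.subset_span ⟨(a+k1-i) :: l1 :: R,
                List.isChain_cons_cons.mpr ⟨hadm2, hadm'⟩, by simp [hRlen], ?_, ?_, ?_,
                (PI_cons _ _).symm⟩
              · simp only [List.sum_cons]; omega
              · simp only [excess_cons, List.sum_cons]; omega
              · simp only [List.headI]
                exact le_max_of_le_right (by omega)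
            · push_neg at hadm2
              have hfuel' : (2 * (k1 :: K').headI - a).toNat ≤ μ := hfuel
              simp only [List.headI] at hfuel'
              have hmu : (2*l1 - (a+k1-i)).toNat < μ := by omega
              have h4 := IHμ _ hmu (a+k1-i) (l1 :: R) hadm' (by simp [hRlen])
                (by simp only [List.headI]; omega)
              refine Submodule.span_mono (goodSet_mono ?_ ?_ ?_) h4
              · simp only [List.sum_cons]; omega
              · simp only [List.sum_cons]; omega
              · apply max_le
                · exact le_max_of_le_right (by omega)
                · exact le_max_of_le_right (by simp only [List.headI]; omega)
        · rw [mul_zero]; exact Submodule.zero_mem _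
        · intro x y hx hy hpx hpy
          rw [mul_add]; exact Submodule.add_mem _ hpx hpy
        · intro c x hx hpx
          rw [mul_smul_comm]; exact Submodule.smul_mem _ _ hpx

lemma main : ∀ (I : List ℤ), I ≠ [] → PI I ∈ Submodule.span (ZMod 2)
    {x : B | ∃ K : List ℤ, Admissible K ∧ K.length = I.length ∧ K.sum = I.sum ∧
      excess I ≤ excess K ∧ x = PI K} := by
  intro I
  induction I with
  | nil => intro h; exact absurd rfl h
  | cons a J IH =>
    intro _
    cases J with
    | nil =>
      exact Submodule.subset_span ⟨[a], List.isChain_singleton a, rfl, rfl, le_refl _, rfl⟩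
    | cons b J' =>
      have hJ := IH (by simp)
      rw [PI_cons]
      refine Submodule.span_induction
        (p := fun x _ => P a * x ∈ Submodule.span (ZMod 2)
          {x : B | ∃ K : List ℤ, Admissible K ∧ K.length = (a :: b :: J').length ∧
            K.sum = (a :: b :: J').sum ∧ excess (a :: b :: J') ≤ excess K ∧ x = PI K})
        ?_ ?_ ?_ ?_ hJ
      · rintro x ⟨K, hadm, hlenK, hsumK, hexcK, rfl⟩
        have h1 := key K.length ((2*K.headI - a).toNat) a K hadm rfl le_rfl
        refine Submodule.span_mono ?_ h1
        rintro y ⟨L, p1, p2, p3, p4, p5, p6⟩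
        refine ⟨L, p1, ?_, ?_, ?_, p6⟩
        · simp [p2, hlenK]
        · simp only [List.sum_cons] at hsumK ⊢
          omega
        · simp only [excess_cons, List.sum_cons] at hexcK ⊢
          simp only [List.sum_cons] at hsumK
          omega
      · rw [mul_zero]; exact Submodule.zero_mem _
      · intro x y hx hy hpx hpy
        rw [mul_add]; exact Submodule.add_mem _ hpx hpy
      · intro c x hx hpx
        rw [mul_smul_comm]; exact Submodule.smul_mem _ _ hpx

theorem statement12 (I : List ℤ) (hI : I ≠ []) :
    PI I ∈ Submodule.span (ZMod 2)
      {x : B | ∃ K : List ℤ, Admissible K ∧ K.length = I.length ∧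
        excess I ≤ excess K ∧ x = PI K} := by
  have h := main I hI
  refine Submodule.span_mono ?_ h
  rintro x ⟨K, h1, h2, h3, h4, h5⟩
  exact ⟨K, h1, h2, h4, h5⟩
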